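/- Let T = ℝᵐ act on L²(ℝᵐ) by translations, τ_b[f](x) := f(x − b). A closed subspace V of L²(ℝᵐ) is invariant under all translations τ_b, b ∈ ℝᵐ, if and only if there exists a measurable set E ⊆ ℝᵐ such that V = F⁻¹[L²(E)], where F denotes the Fourier transform on L²(ℝᵐ) and L²(E) is the subspace of functions in L²(ℝᵐ) vanishing almost everywhere outside E. -/

import Mathlib

open MeasureTheory Filter Complex
open scoped FourierTransform RealInnerProductSpace ContDiff

noncomputable section Statement10Aux

variable {m : ℕ}

/-- The modulation kernel. -/
def stKer (m : ℕ) (b ξ : Fin m → ℝ) : ℂ :=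
  Complex.exp (-(2 * (Real.pi : ℂ) * Complex.I) * ((∑ i, b i * ξ i : ℝ) : ℂ))

lemma stKer_eq (b ξ : Fin m → ℝ) :
    stKer m b ξ = Complex.exp (((-(2 * Real.pi * ∑ i, b i * ξ i) : ℝ) : ℂ) * Complex.I) := by
  unfold stKer; congr 1; push_cast; ring_nf

lemma norm_stKer (b ξ : Fin m → ℝ) : ‖stKer m b ξ‖ = 1 := by
  rw [stKer_eq, Complex.norm_exp_ofReal_mul_I]

lemma stKer_mul (b c ξ : Fin m → ℝ) : stKer m b ξ * stKer m c ξ = stKer m (b + c) ξ := by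
  unfold stKer
  rw [← Complex.exp_add]
  congr 1
  have h : (∑ i, (b + c) i * ξ i) = (∑ i, b i * ξ i) + ∑ i, c i * ξ i := by
    rw [← Finset.sum_add_distrib]
    exact Finset.sum_congr rfl fun i _ => by simp [add_mul]
  rw [h]; push_cast; ring

lemma conj_stKer (b ξ : Fin m → ℝ) :
    (starRingEnd ℂ) (stKer m b ξ) = stKer m (-b) ξ := by
  unfold stKer
  rw [← Complex.exp_conj]
  congr 1
  have h : (∑ i, (-b) i * ξ i) = -∑ i, b i * ξ i := by
    rw [← Finset.sum_neg_distrib]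
    exact Finset.sum_congr rfl fun i _ => by simp
  rw [h]
  simp only [map_mul, map_neg, Complex.conj_I, Complex.conj_ofReal, map_ofNat]
  push_cast; ring

lemma stKer_zero (ξ : Fin m → ℝ) : stKer m 0 ξ = 1 := by
  unfold stKer; simp

lemma continuous_stKer (b : Fin m → ℝ) : Continuous (stKer m b) := by
  unfold stKer
  exact Complex.continuous_exp.comp <| continuous_const.mul <|
    Complex.continuous_ofReal.comp <| continuous_finset_sum _ fun i _ =>
      (continuous_const.mul (continuous_apply i))

lemma memLp_stKer_mul (b : Fin m → ℝ) (g : Lp ℂ 2 (volume : Measure (Fin m → ℝ))) :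
    MemLp (fun ξ => stKer m b ξ * g ξ) 2 (volume : Measure (Fin m → ℝ)) := by
  refine MemLp.of_le (Lp.memLp g)
    (((continuous_stKer b).aestronglyMeasurable).mul (Lp.aestronglyMeasurable g)) ?_
  filter_upwards with ξ
  rw [norm_mul, norm_stKer, one_mul]

/-- Modulation operator on `L²`. -/
def stMod (b : Fin m → ℝ) (g : Lp ℂ 2 (volume : Measure (Fin m → ℝ))) :
    Lp ℂ 2 (volume : Measure (Fin m → ℝ)) :=
  (memLp_stKer_mul b g).toLp _

lemma coeFn_stMod (b : Fin m → ℝ) (g : Lp ℂ 2 (volume : Measure (Fin m → ℝ))) :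
    ⇑(stMod b g) =ᵐ[volume] fun ξ => stKer m b ξ * g ξ :=
  MemLp.coeFn_toLp _

lemma norm_stMod (b : Fin m → ℝ) (g : Lp ℂ 2 (volume : Measure (Fin m → ℝ))) :
    ‖stMod b g‖ = ‖g‖ := by
  rw [stMod, Lp.norm_toLp, Lp.norm_def]
  congr 1
  apply eLpNorm_congr_norm_ae
  filter_upwards with ξ
  rw [norm_mul, norm_stKer, one_mul]

lemma stMod_sub (b : Fin m → ℝ) (g g' : Lp ℂ 2 (volume : Measure (Fin m → ℝ))) :
    stMod b (g - g') = stMod b g - stMod b g' := by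
  apply Lp.ext
  filter_upwards [coeFn_stMod b (g - g'), coeFn_stMod b g, coeFn_stMod b g',
    Lp.coeFn_sub g g', Lp.coeFn_sub (stMod b g) (stMod b g')] with ξ h1 h2 h3 h4 h5
  rw [h1, h5, Pi.sub_apply, h2, h3, h4, Pi.sub_apply, mul_sub]

lemma isometry_stMod (b : Fin m → ℝ) :
    Isometry (stMod b : Lp ℂ 2 (volume : Measure (Fin m → ℝ)) → _) := by
  refine Isometry.of_dist_eq fun g g' => ?_
  rw [dist_eq_norm, dist_eq_norm, ← stMod_sub, norm_stMod]

lemma stMod_stMod (b : Fin m → ℝ) (g : Lp ℂ 2 (volume : Measure (Fin m → ℝ))) :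
    stMod (-b) (stMod b g) = g := by
  apply Lp.ext
  filter_upwards [coeFn_stMod (-b) (stMod b g), coeFn_stMod b g] with ξ h1 h2
  rw [h1, h2, ← mul_assoc, stKer_mul, neg_add_cancel, stKer_zero, one_mul]

/-- Translation operator on `L²`. -/
def stTrans (b : Fin m → ℝ) :
    Lp ℂ 2 (volume : Measure (Fin m → ℝ)) →+ Lp ℂ 2 (volume : Measure (Fin m → ℝ)) :=
  Lp.compMeasurePreserving (· - b) (measurePreserving_sub_right volume b)

lemma coeFn_stTrans (b : Fin m → ℝ) (f : Lp ℂ 2 (volume : Measure (Fin m → ℝ))) :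
    ⇑(stTrans b f) =ᵐ[volume] fun x => f (x - b) :=
  Lp.coeFn_compMeasurePreserving f _

lemma integrable_stTrans (b : Fin m → ℝ) (f : Lp ℂ 2 (volume : Measure (Fin m → ℝ)))
    (hf : Integrable (⇑f) volume) : Integrable (⇑(stTrans b f)) volume := by
  have h1 : Integrable (⇑f ∘ (· - b)) volume := by
    rw [MeasurePreserving.integrable_comp_emb (measurePreserving_sub_right volume b)
      (MeasurableEquiv.subRight b).measurableEmbedding]
    exact hf
  exact h1.congr (coeFn_stTrans b f).symm


lemma integral_stKer_stTrans (b : Fin m → ℝ) (f : Lp ℂ 2 (volume : Measure (Fin m → ℝ)))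
    (ξ : Fin m → ℝ) :
    ∫ x, stKer m x ξ * (stTrans b f) x = stKer m b ξ * ∫ x, stKer m x ξ * f x := by
  have h1 : ∫ x, stKer m x ξ * (stTrans b f) x = ∫ x, stKer m x ξ * f (x - b) := by
    apply integral_congr_ae
    filter_upwards [coeFn_stTrans b f] with x hx
    rw [hx]
  rw [h1, ← integral_add_right_eq_self (fun x => stKer m x ξ * f (x - b)) b]
  simp only [add_sub_cancel_right]
  rw [← integral_const_mul]
  congr 1 with x
  rw [← mul_assoc]
  congr 1
  rw [← stKer_mul, mul_comm]

lemma F_stTrans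
    (F : Lp ℂ 2 (volume : Measure (Fin m → ℝ)) ≃ₗᵢ[ℂ]
      Lp ℂ 2 (volume : Measure (Fin m → ℝ)))
    (hF : ∀ f : Lp ℂ 2 (volume : Measure (Fin m → ℝ)), Integrable (⇑f) volume →
      ⇑(F f) =ᵐ[volume] fun ξ : Fin m → ℝ =>
        ∫ x : Fin m → ℝ,
          Complex.exp (-(2 * (Real.pi : ℂ) * Complex.I) * ((∑ i, x i * ξ i : ℝ) : ℂ)) * f x)
    (b : Fin m → ℝ) (f : Lp ℂ 2 (volume : Measure (Fin m → ℝ))) :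
    F (stTrans b f) = stMod b (F f) := by
  have hF' : ∀ f : Lp ℂ 2 (volume : Measure (Fin m → ℝ)), Integrable (⇑f) volume →
      ⇑(F f) =ᵐ[volume] fun ξ => ∫ x, stKer m x ξ * f x := hF
  have key : ∀ f : Lp ℂ 2 (volume : Measure (Fin m → ℝ)), Integrable (⇑f) volume →
      F (stTrans b f) = stMod b (F f) := by
    intro f hf
    apply Lp.ext
    have h1 := hF' (stTrans b f) (integrable_stTrans b f hf)
    have h2 := hF' f hf
    filter_upwards [h1, h2.mono fun ξ h => h, coeFn_stMod b (F f)] with ξ e1 e2 e3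
    rw [e1, integral_stKer_stTrans b f ξ, e3, ← e2]
  -- density argument
  have hc1 : Continuous fun g : Lp ℂ 2 (volume : Measure (Fin m → ℝ)) => F (stTrans b g) :=
    F.continuous.comp (Lp.isometry_compMeasurePreserving
      (measurePreserving_sub_right volume b)).continuous
  have hc2 : Continuous fun g : Lp ℂ 2 (volume : Measure (Fin m → ℝ)) => stMod b (F g) :=
    (isometry_stMod b).continuous.comp F.continuous
  have hdense : DenseRange ((↑) : Lp.simpleFunc ℂ 2 (volume : Measure (Fin m → ℝ)) →
      Lp ℂ 2 (volume : Measure (Fin m → ℝ))) :=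
    Lp.simpleFunc.denseRange (by norm_num)
  have heq : (fun g => F (stTrans b g)) = fun g => stMod b (F g) := by
    refine hc1.ext_on hdense hc2 ?_
    rintro _ ⟨s, rfl⟩
    refine key _ ?_
    have hsint : Integrable (⇑(Lp.simpleFunc.toSimpleFunc s)) volume :=
      (SimpleFunc.memLp_iff_integrable (by norm_num) (by norm_num)).mp (Lp.simpleFunc.memLp s)
    exact hsint.congr (Lp.simpleFunc.toSimpleFunc_eq_toFun s)
  exact congrFun heq f


/-- A smooth compactly supported function, as a Schwartz map. -/
def toSchwartz {V : Type*} [NormedAddCommGroup V] [NormedSpace ℝ V]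
    (g : V → ℂ) (hg : ContDiff ℝ ∞ g) (hsupp : HasCompactSupport g) :
    SchwartzMap V ℂ where
  toFun := g
  smooth' := hg
  decay' := by
    intro k n
    have h1 : Continuous fun x => ‖x‖ ^ k * ‖iteratedFDeriv ℝ n g x‖ :=
      ((continuous_norm.pow k).mul
        ((hg.continuous_iteratedFDeriv (by exact_mod_cast le_top)).norm))
    have h2 : HasCompactSupport fun x => ‖x‖ ^ k * ‖iteratedFDeriv ℝ n g x‖ :=
      ((hsupp.iteratedFDeriv n).norm).mul_left
    obtain ⟨C, hC⟩ := h2.exists_bound_of_continuous h1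
    exact ⟨C, fun x => by simpa using hC x⟩

lemma fourier_unique_euclidean {d : ℕ} {k : EuclideanSpace ℝ (Fin d) → ℂ}
    (hk : Integrable k (volume : Measure (EuclideanSpace ℝ (Fin d))))
    (h0 : ∀ b, 𝓕 k b = 0) : k =ᵐ[volume] 0 := by
  apply ae_eq_zero_of_integral_contDiff_smul_eq_zero hk.locallyIntegrable
  intro g hg hgsupp
  set gC : EuclideanSpace ℝ (Fin d) → ℂ := fun x => (g x : ℂ) with hgC_def
  have hgC : ContDiff ℝ ∞ gC := Complex.ofRealCLM.contDiff.comp hg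
  have hgCsupp : HasCompactSupport gC := hgsupp.comp_left Complex.ofReal_zero
  set gS := toSchwartz gC hgC hgCsupp with hgS_def
  set φ := (SchwartzMap.fourierTransformCLE ℂ (SchwartzMap (EuclideanSpace ℝ (Fin d)) ℂ)).symm gS with hφ_def
  have hφF : 𝓕 ⇑φ = gC := by
    have h1 : SchwartzMap.fourierTransformCLE ℂ (SchwartzMap (EuclideanSpace ℝ (Fin d)) ℂ) φ = gS :=
      (SchwartzMap.fourierTransformCLE ℂ (SchwartzMap (EuclideanSpace ℝ (Fin d)) ℂ)).apply_symm_apply gS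
    have h2 : ⇑(SchwartzMap.fourierTransformCLE ℂ (SchwartzMap (EuclideanSpace ℝ (Fin d)) ℂ) φ) = 𝓕 ⇑φ := by
      rfl
    rw [← h2, h1]; rfl
  have mult := VectorFourier.integral_fourierIntegral_smul_eq_flip
    (L := innerₗ (EuclideanSpace ℝ (Fin d))) Real.continuous_fourierChar
    continuous_inner (φ.integrable (μ := volume)) hk
  rw [flip_innerₗ] at mult
  calc ∫ x, g x • k x = ∫ ξ, (𝓕 ⇑φ) ξ • k ξ := by
        rw [hφF]
        refine integral_congr_ae (Eventually.of_forall fun x => ?_)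
        simp only [hgC_def, Complex.real_smul, smul_eq_mul]
      _ = ∫ x, ⇑φ x • 𝓕 k x := mult
      _ = 0 := by simp [h0]

lemma fourier_unique {k : (Fin m → ℝ) → ℂ}
    (hk : Integrable k (volume : Measure (Fin m → ℝ)))
    (h0 : ∀ b : Fin m → ℝ, ∫ ξ, stKer m b ξ * k ξ = 0) :
    k =ᵐ[(volume : Measure (Fin m → ℝ))] 0 := by
  set ψ := (MeasurableEquiv.toLp 2 (Fin m → ℝ)).symm with hψ_def
  have hψ : MeasurePreserving ψ volume volume :=
    EuclideanSpace.volume_preserving_symm_measurableEquiv_toLp (Fin m)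
  set kE : EuclideanSpace ℝ (Fin m) → ℂ := fun v => k (ψ v) with hkE_def
  have hkE : Integrable kE volume :=
    (hψ.integrable_comp_emb ψ.measurableEmbedding).mpr hk
  have hFk : ∀ b, 𝓕 kE b = 0 := by
    intro b
    rw [Real.fourier_eq']
    have hker : ∀ v : EuclideanSpace ℝ (Fin m),
        Complex.exp (((-2 * Real.pi * ⟪v, b⟫ : ℝ) : ℂ) * Complex.I) • kE v
          = stKer m (ψ b) (ψ v) * k (ψ v) := by
      intro v
      rw [smul_eq_mul]
      congr 1
      rw [stKer_eq]
      congr 2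
      have h3 : (∑ i, (ψ b) i * (ψ v) i) = ⟪v, b⟫ := by
        rw [PiLp.inner_apply]
        refine Finset.sum_congr rfl fun i _ => ?_
        simp only [RCLike.inner_apply, conj_trivial]
        show b.ofLp i * v.ofLp i = b.ofLp i * v.ofLp i
        ring
      rw [h3]
      ring
    calc ∫ v, Complex.exp (((-2 * Real.pi * ⟪v, b⟫ : ℝ) : ℂ) * Complex.I) • kE v
        = ∫ v, stKer m (ψ b) (ψ v) * k (ψ v) := by simp only [hker]
      _ = ∫ ξ, stKer m (ψ b) ξ * k ξ := hψ.integral_comp' fun ξ => stKer m (ψ b) ξ * k ξ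
      _ = 0 := h0 (ψ b)
  have hE0 : kE =ᵐ[volume] 0 := fourier_unique_euclidean hkE hFk
  have h4 : k = kE ∘ ψ.symm := by
    funext ξ; simp [hkE_def]
  rw [h4]
  have h5 : (0 : (Fin m → ℝ) → ℂ) = (0 : EuclideanSpace ℝ (Fin m) → ℂ) ∘ ψ.symm := rfl
  rw [h5]
  exact ae_eq_comp (ψ.symm.measurable.aemeasurable) (by rwa [(hψ.symm ψ).map_eq])


lemma inner_stMod_left (b : Fin m → ℝ) (u v : Lp ℂ 2 (volume : Measure (Fin m → ℝ))) :
    (inner ℂ (stMod b u) v : ℂ)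
      = ∫ ξ, stKer m (-b) ξ * ((starRingEnd ℂ) (u ξ) * v ξ) ∂volume := by
  rw [L2.inner_def]
  apply integral_congr_ae
  filter_upwards [coeFn_stMod b u] with ξ h1
  rw [RCLike.inner_apply, h1, map_mul, conj_stKer]
  ring

lemma inner_stMod_adjoint (b : Fin m → ℝ) (u v : Lp ℂ 2 (volume : Measure (Fin m → ℝ))) :
    (inner ℂ (stMod b u) v : ℂ) = inner ℂ u (stMod (-b) v) := by
  rw [L2.inner_def, L2.inner_def]
  apply integral_congr_ae
  filter_upwards [coeFn_stMod b u, coeFn_stMod (-b) v] with ξ h1 h2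
  rw [RCLike.inner_apply, RCLike.inner_apply, h1, h2, map_mul, conj_stKer]
  ring

lemma gauss_memLp :
    MemLp (fun ξ : Fin m → ℝ => ((Real.exp (-∑ i, ξ i ^ 2) : ℝ) : ℂ)) 2
      (volume : Measure (Fin m → ℝ)) := by
  have hcont : Continuous fun ξ : Fin m → ℝ => ((Real.exp (-∑ i, ξ i ^ 2) : ℝ) : ℂ) := by
    refine Complex.continuous_ofReal.comp (Real.continuous_exp.comp ?_)
    exact (continuous_finset_sum _ fun i _ => (continuous_apply i).pow 2).neg
  rw [memLp_two_iff_integrable_sq_norm hcont.aestronglyMeasurable]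
  have h1 : Integrable
      (fun ξ : Fin m → ℝ => Complex.exp (-(2:ℂ) * ∑ i, (ξ i : ℂ) ^ 2 + ∑ i, (0:ℂ) * ξ i))
      (volume : Measure (Fin m → ℝ)) :=
    GaussianFourier.integrable_cexp_neg_mul_sum_add (by norm_num) fun _ => 0
  refine h1.norm.congr (Eventually.of_forall fun ξ => ?_)
  beta_reduce
  have h2 : (-(2:ℂ) * ∑ i, (ξ i : ℂ) ^ 2 + ∑ i, (0:ℂ) * ξ i)
      = ((-2 * ∑ i, ξ i ^ 2 : ℝ) : ℂ) := by
    push_cast; simp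
  rw [h2, ← Complex.ofReal_exp, Complex.norm_real, Real.norm_eq_abs,
    abs_of_pos (Real.exp_pos _), Complex.norm_real, Real.norm_eq_abs,
    abs_of_pos (Real.exp_pos _), sq, ← Real.exp_add]
  ring_nf

end Statement10Aux

/-- Let `T = ℝᵐ` act on `L²(ℝᵐ)` by translations
`τ_b[f](x) = f(x - b)`.  A closed subspace `V ⊆ L²(ℝᵐ)` is invariant under all
translations if and only if there is a measurable set `E ⊆ ℝᵐ` with `V = F⁻¹[L²(E)]`,
where `F` is the Fourier–Plancherel transform (a unitary operator on `L²(ℝᵐ)` agreeing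
with the Fourier integral on integrable functions) and `L²(E)` is the set of `h ∈ L²(ℝᵐ)`
vanishing a.e. outside `E`. -/
theorem statement10 (m : ℕ)
    (F : Lp ℂ 2 (volume : Measure (Fin m → ℝ)) ≃ₗᵢ[ℂ]
      Lp ℂ 2 (volume : Measure (Fin m → ℝ)))
    (hF : ∀ f : Lp ℂ 2 (volume : Measure (Fin m → ℝ)), Integrable (⇑f) volume →
      ⇑(F f) =ᵐ[volume] fun ξ : Fin m → ℝ =>
        ∫ x : Fin m → ℝ,
          Complex.exp (-(2 * (Real.pi : ℂ) * Complex.I) * ((∑ i, x i * ξ i : ℝ) : ℂ)) * f x)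
    (V : Submodule ℂ (Lp ℂ 2 (volume : Measure (Fin m → ℝ))))
    (hclosed : IsClosed (V : Set (Lp ℂ 2 (volume : Measure (Fin m → ℝ))))) :
    (∀ (b : Fin m → ℝ) (f h : Lp ℂ 2 (volume : Measure (Fin m → ℝ))), f ∈ V →
        (⇑h =ᵐ[volume] fun x => f (x - b)) → h ∈ V) ↔
      ∃ E : Set (Fin m → ℝ), MeasurableSet E ∧
        ∀ f : Lp ℂ 2 (volume : Measure (Fin m → ℝ)),
          f ∈ V ↔ ∀ᵐ ξ ∂(volume : Measure (Fin m → ℝ)), ξ ∉ E → F f ξ = 0 := by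
  constructor
  · -- forward direction: Wiener's theorem
    intro hinv
    have hTV : ∀ (b : Fin m → ℝ) (f : Lp ℂ 2 (volume : Measure (Fin m → ℝ))),
        f ∈ V → stTrans b f ∈ V := fun b f hf =>
      hinv b f (stTrans b f) hf (coeFn_stTrans b f)
    set W : Submodule ℂ (Lp ℂ 2 (volume : Measure (Fin m → ℝ))) :=
      V.comap (F.symm.toLinearEquiv.toLinearMap) with hW_def
    have hWmem : ∀ g, g ∈ W ↔ F.symm g ∈ V := by
      intro g
      rw [hW_def, Submodule.mem_comap]
      rfl
    have hWclosed : IsClosed (W : Set (Lp ℂ 2 (volume : Measure (Fin m → ℝ)))) :=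
      IsClosed.preimage F.symm.continuous hclosed
    haveI : CompleteSpace W := hWclosed.completeSpace_coe
    have hMW : ∀ (b : Fin m → ℝ) g, g ∈ W → stMod b g ∈ W := by
      intro b g hg
      rw [hWmem] at hg ⊢
      have h3 := F_stTrans F hF b (F.symm g)
      rw [F.apply_symm_apply] at h3
      have h2 : F.symm (stMod b g) = stTrans b (F.symm g) := by
        rw [← h3, F.symm_apply_apply]
      rw [h2]
      exact hTV b _ hg
    have hMWperp : ∀ (b : Fin m → ℝ) u, u ∈ Wᗮ → stMod b u ∈ Wᗮ := by
      intro b u hu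
      rw [Submodule.mem_orthogonal] at hu ⊢
      intro x hx
      have h1 := inner_stMod_adjoint (-b) x u
      rw [neg_neg] at h1
      rw [← h1]
      exact hu _ (hMW (-b) x hx)
    have hcomm : ∀ (b : Fin m → ℝ) g,
        ((W.orthogonalProjectionOnto (stMod b g) : Lp ℂ 2 (volume : Measure (Fin m → ℝ))))
          = stMod b (W.orthogonalProjectionOnto g :
              Lp ℂ 2 (volume : Measure (Fin m → ℝ))) := by
      intro b g
      refine Submodule.eq_starProjection_of_mem_orthogonal
        (hMW b _ (SetLike.coe_mem (W.orthogonalProjectionOnto g))) ?_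
      rw [← stMod_sub]
      exact hMWperp b _ (Submodule.sub_starProjection_mem_orthogonal g)
    have key6 : ∀ g h : Lp ℂ 2 (volume : Measure (Fin m → ℝ)),
        (fun ξ => (starRingEnd ℂ)
            ((W.orthogonalProjectionOnto g : Lp ℂ 2 (volume : Measure (Fin m → ℝ))) ξ) * h ξ)
          =ᵐ[volume]
        (fun ξ => (starRingEnd ℂ) (g ξ) *
            (W.orthogonalProjectionOnto h : Lp ℂ 2 (volume : Measure (Fin m → ℝ))) ξ) := by
      intro g h
      have hint1 : Integrable (fun ξ => (starRingEnd ℂ)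
          ((W.orthogonalProjectionOnto g : Lp ℂ 2 (volume : Measure (Fin m → ℝ))) ξ) * h ξ)
          volume := by
        have := L2.integrable_inner (𝕜 := ℂ)
          ((W.orthogonalProjectionOnto g : Lp ℂ 2 (volume : Measure (Fin m → ℝ)))) h
        simpa [RCLike.inner_apply, mul_comm] using this
      have hint2 : Integrable (fun ξ => (starRingEnd ℂ) (g ξ) *
          (W.orthogonalProjectionOnto h : Lp ℂ 2 (volume : Measure (Fin m → ℝ))) ξ) volume := by
        have := L2.integrable_inner (𝕜 := ℂ) g
          ((W.orthogonalProjectionOnto h : Lp ℂ 2 (volume : Measure (Fin m → ℝ))))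
        simpa [RCLike.inner_apply, mul_comm] using this
      have hzero : ∀ b : Fin m → ℝ, ∫ ξ, stKer m b ξ *
          ((starRingEnd ℂ)
              ((W.orthogonalProjectionOnto g : Lp ℂ 2 (volume : Measure (Fin m → ℝ))) ξ) * h ξ
            - (starRingEnd ℂ) (g ξ) *
              (W.orthogonalProjectionOnto h : Lp ℂ 2 (volume : Measure (Fin m → ℝ))) ξ) = 0 := by
        intro b
        have c2 := Submodule.inner_starProjection_left_eq_right W (stMod (-b) g) h
        rw [Submodule.starProjection_apply, Submodule.starProjection_apply] at c2
        rw [hcomm (-b) g] at c2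
        rw [inner_stMod_left, inner_stMod_left, neg_neg] at c2
        have hint1' : Integrable (fun ξ => stKer m b ξ * ((starRingEnd ℂ)
            ((W.orthogonalProjectionOnto g : Lp ℂ 2 (volume : Measure (Fin m → ℝ))) ξ) * h ξ))
            volume :=
          hint1.bdd_mul (continuous_stKer b).aestronglyMeasurable
            (c := 1) (Eventually.of_forall fun ξ => le_of_eq (norm_stKer b ξ))
        have hint2' : Integrable (fun ξ => stKer m b ξ * ((starRingEnd ℂ) (g ξ) *
            (W.orthogonalProjectionOnto h : Lp ℂ 2 (volume : Measure (Fin m → ℝ))) ξ)) volume :=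
          hint2.bdd_mul (continuous_stKer b).aestronglyMeasurable
            (c := 1) (Eventually.of_forall fun ξ => le_of_eq (norm_stKer b ξ))
        calc ∫ ξ, stKer m b ξ * ((starRingEnd ℂ)
                ((W.orthogonalProjectionOnto g : Lp ℂ 2 (volume : Measure (Fin m → ℝ))) ξ) * h ξ
              - (starRingEnd ℂ) (g ξ) *
                (W.orthogonalProjectionOnto h : Lp ℂ 2 (volume : Measure (Fin m → ℝ))) ξ)
            = ∫ ξ, (stKer m b ξ * ((starRingEnd ℂ)
                ((W.orthogonalProjectionOnto g : Lp ℂ 2 (volume : Measure (Fin m → ℝ))) ξ) * h ξ)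
              - stKer m b ξ * ((starRingEnd ℂ) (g ξ) *
                (W.orthogonalProjectionOnto h : Lp ℂ 2 (volume : Measure (Fin m → ℝ))) ξ)) := by
              congr 1 with ξ
              ring
          _ = 0 := by
              rw [integral_sub hint1' hint2', c2, sub_self]
      have hae := fourier_unique (hint1.sub hint2) hzero
      filter_upwards [hae] with ξ hξ
      exact sub_eq_zero.mp hξ
    -- the Gaussian weight
    have hwmem := gauss_memLp (m := m)
    set wfun : (Fin m → ℝ) → ℂ := fun ξ => ((Real.exp (-∑ i, ξ i ^ 2) : ℝ) : ℂ) with hwfun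
    set w : Lp ℂ 2 (volume : Measure (Fin m → ℝ)) := hwmem.toLp _ with hw
    have hw0 : ∀ ξ, wfun ξ ≠ 0 := fun ξ =>
      Complex.ofReal_ne_zero.mpr (Real.exp_ne_zero _)
    have hwreal : ∀ ξ, (starRingEnd ℂ) (wfun ξ) = wfun ξ := fun ξ => Complex.conj_ofReal _
    set φd : (Fin m → ℝ) → ℂ := fun ξ =>
      (W.orthogonalProjectionOnto w : Lp ℂ 2 (volume : Measure (Fin m → ℝ))) ξ / wfun ξ with hφd
    have hφmeas : Measurable φd := by
      refine Measurable.div ?_ ?_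
      · exact (Lp.stronglyMeasurable _).measurable
      · exact (Complex.continuous_ofReal.comp (Real.continuous_exp.comp
          ((continuous_finset_sum _ fun i _ => (continuous_apply i).pow 2).neg))).measurable
    set E : Set (Fin m → ℝ) := φd ⁻¹' {1} with hE
    have hEmeas : MeasurableSet E := hφmeas (measurableSet_singleton 1)
    have hPwval : ∀ ξ, (W.orthogonalProjectionOnto w :
        Lp ℂ 2 (volume : Measure (Fin m → ℝ))) ξ = φd ξ * wfun ξ := by
      intro ξ
      rw [hφd]
      exact (div_mul_cancel₀ _ (hw0 ξ)).symm
    have fact1 : ∀ h : Lp ℂ 2 (volume : Measure (Fin m → ℝ)),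
        ⇑(W.orthogonalProjectionOnto h : Lp ℂ 2 (volume : Measure (Fin m → ℝ)))
          =ᵐ[volume] fun ξ => (starRingEnd ℂ) (φd ξ) * h ξ := by
      intro h
      filter_upwards [key6 w h, hwmem.coeFn_toLp] with ξ e1 e2
      have e3 : (starRingEnd ℂ) (φd ξ) = (starRingEnd ℂ)
          ((W.orthogonalProjectionOnto w : Lp ℂ 2 (volume : Measure (Fin m → ℝ))) ξ) / wfun ξ := by
        rw [hφd]
        simp only [map_div₀, hwreal]
      rw [e3, div_mul_eq_mul_div, e1, e2, hwreal, mul_div_cancel_left₀ _ (hw0 ξ)]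
    have fact2 : ∀ᵐ ξ ∂(volume : Measure (Fin m → ℝ)), φd ξ = 0 ∨ φd ξ = 1 := by
      have hPw : (W.orthogonalProjectionOnto ((W.orthogonalProjectionOnto w :
          Lp ℂ 2 (volume : Measure (Fin m → ℝ)))) :
            Lp ℂ 2 (volume : Measure (Fin m → ℝ)))
          = (W.orthogonalProjectionOnto w : Lp ℂ 2 (volume : Measure (Fin m → ℝ))) :=
        Submodule.starProjection_eq_self_iff.mpr (SetLike.coe_mem _)
      have f1 := fact1 w
      have f2 := fact1 ((W.orthogonalProjectionOnto w : Lp ℂ 2 (volume : Measure (Fin m → ℝ))))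
      rw [hPw] at f2
      filter_upwards [f1, f2, hwmem.coeFn_toLp] with ξ e1 e2 e3
      have hreal : φd ξ = (starRingEnd ℂ) (φd ξ) := by
        have h4 := e1
        rw [hPwval ξ, e3] at h4
        exact mul_right_cancel₀ (hw0 ξ) h4
      rcases eq_or_ne (φd ξ) 0 with h5 | h5
      · exact Or.inl h5
      · refine Or.inr ?_
        have h6 := e2
        rw [hPwval ξ] at h6
        -- h6 : φd ξ * wfun ξ = conj (φd ξ) * (φd ξ * wfun ξ)
        have h7 : φd ξ * wfun ξ = (φd ξ * φd ξ) * wfun ξ := by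
          rw [h6, ← hreal]; ring
        have h8 : φd ξ = φd ξ * φd ξ := mul_right_cancel₀ (hw0 ξ) h7
        have h9 := mul_left_cancel₀ h5 (show φd ξ * 1 = φd ξ * φd ξ by rw [mul_one]; exact h8)
        exact h9.symm
    refine ⟨E, hEmeas, fun f => ?_⟩
    have hfW : f ∈ V ↔ F f ∈ W := by
      constructor
      · intro hfv
        rw [hWmem (F f), F.symm_apply_apply]
        exact hfv
      · intro hfw
        have := (hWmem (F f)).mp hfw
        rwa [F.symm_apply_apply] at this
    rw [hfW]
    constructor
    · intro hfw
      have hfix : ((W.orthogonalProjectionOnto (F f) :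
          Lp ℂ 2 (volume : Measure (Fin m → ℝ)))) = F f :=
        Submodule.starProjection_eq_self_iff.mpr hfw
      have h1 := fact1 (F f)
      rw [hfix] at h1
      filter_upwards [h1, fact2] with ξ e1 e2 hξ
      rcases e2 with h0 | h1'
      · rw [e1, h0, map_zero, zero_mul]
      · exact absurd h1' hξ
    · intro hf0
      have hfix : ((W.orthogonalProjectionOnto (F f) :
          Lp ℂ 2 (volume : Measure (Fin m → ℝ)))) = F f := by
        apply Lp.ext
        filter_upwards [fact1 (F f), fact2, hf0] with ξ e1 e2 e3
        rw [e1]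
        by_cases hξ : ξ ∈ E
        · have h1' : φd ξ = 1 := hξ
          rw [h1', map_one, one_mul]
        · rw [e3 hξ, mul_zero]
      rw [← hfix]
      exact SetLike.coe_mem _
  · -- reverse direction
    rintro ⟨E, hEmeas, hchar⟩
    intro b f h hfV hh
    have hfh : h = stTrans b f := Lp.ext (hh.trans (coeFn_stTrans b f).symm)
    rw [hchar h]
    have hFf := (hchar f).mp hfV
    have hmod : F h = stMod b (F f) := by
      rw [hfh]; exact F_stTrans F hF b f
    rw [hmod]
    filter_upwards [coeFn_stMod b (F f), hFf] with ξ e1 e2 hξ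
    rw [e1, e2 hξ, mul_zero]
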